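/- arXiv:1507.00809 — 2 statements merged into one kernel-verified Lean document; each statement's English description precedes it below -/
import Mathlib

section
/- Let d ≥ 1, let O ∈ O(d), let a₁, a₉ be nonzero reals, a₅ > 0, let a₄ ∈ ℝ^d be a column vector, a₈ ∈ ℝ^d a row vector, and a₇ ∈ ℝ. Let g be the (d+2)×(d+2) real block matrix g = [[a₁, 0, 0], [a₄, a₅ O, 0], [a₇, a₈, a₉]] (blocks of sizes 1, d, 1). Suppose that for every v ∈ ℝ^d there exists v' ∈ ℝ^d with g · N(v) = N(v') · g. Then: (a) a₅² = a₁ a₉; (b) for each v, the vector v' is uniquely determined and equals (a₉/a₅) · v Oᵀ; (c) a₈ = (a₉/a₅) · (Oᵀ a₄)ᵀ. In particular, if a₁ = a₅ then a₁ = a₅ = a₉. -/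
open Matrix

/-- The standard cusp matrix `N(v) = [[1,0,0],[vᵀ,I_d,0],[‖v‖²/2,v,1]]`
(blocks of sizes `1, d, 1`). -/
noncomputable def cuspN (d : ℕ) (v : Fin d → ℝ) :
    Matrix (Fin 1 ⊕ Fin d ⊕ Fin 1) (Fin 1 ⊕ Fin d ⊕ Fin 1) ℝ :=
  Matrix.of fun i j =>
    match i, j with
    | Sum.inl _, Sum.inl _ => 1
    | Sum.inl _, _ => 0
    | Sum.inr (Sum.inl k), Sum.inl _ => v k
    | Sum.inr (Sum.inl k), Sum.inr (Sum.inl l) => if k = l then 1 else 0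
    | Sum.inr (Sum.inl _), Sum.inr (Sum.inr _) => 0
    | Sum.inr (Sum.inr _), Sum.inl _ => dotProduct v v / 2
    | Sum.inr (Sum.inr _), Sum.inr (Sum.inl l) => v l
    | Sum.inr (Sum.inr _), Sum.inr (Sum.inr _) => 1

/-- The block matrix `g = [[a₁,0,0],[a₄,a₅O,0],[a₇,a₈,a₉]]` (blocks of sizes `1, d, 1`). -/
noncomputable def lowerBlockMat (d : ℕ) (a₁ a₅ a₇ a₉ : ℝ) (a₄ a₈ : Fin d → ℝ)
    (O : Matrix (Fin d) (Fin d) ℝ) :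
    Matrix (Fin 1 ⊕ Fin d ⊕ Fin 1) (Fin 1 ⊕ Fin d ⊕ Fin 1) ℝ :=
  Matrix.of fun i j =>
    match i, j with
    | Sum.inl _, Sum.inl _ => a₁
    | Sum.inl _, _ => 0
    | Sum.inr (Sum.inl k), Sum.inl _ => a₄ k
    | Sum.inr (Sum.inl k), Sum.inr (Sum.inl l) => a₅ * O k l
    | Sum.inr (Sum.inl _), Sum.inr (Sum.inr _) => 0
    | Sum.inr (Sum.inr _), Sum.inl _ => a₇
    | Sum.inr (Sum.inr _), Sum.inr (Sum.inl l) => a₈ l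
    | Sum.inr (Sum.inr _), Sum.inr (Sum.inr _) => a₉

/-- Lemmas 4.2 and 4.5 of the paper. If `g·N(v) = N(v')·g` has a
solution `v'` for every `v`, then `a₅² = a₁a₉`, the solution is uniquely
`v' = (a₉/a₅)·vOᵀ`, and `a₈ = (a₉/a₅)·(Oᵀa₄)ᵀ`; in particular `a₁ = a₅` forces
`a₁ = a₅ = a₉`. -/
theorem stmt5 (d : ℕ) (hd : 1 ≤ d)
    (O : Matrix (Fin d) (Fin d) ℝ) (hO : O ∈ Matrix.orthogonalGroup (Fin d) ℝ)
    (a₁ a₉ : ℝ) (ha₁ : a₁ ≠ 0) (ha₉ : a₉ ≠ 0) (a₅ : ℝ) (ha₅ : 0 < a₅)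
    (a₄ a₈ : Fin d → ℝ) (a₇ : ℝ)
    (h : ∀ v : Fin d → ℝ, ∃ v' : Fin d → ℝ,
      lowerBlockMat d a₁ a₅ a₇ a₉ a₄ a₈ O * cuspN d v =
        cuspN d v' * lowerBlockMat d a₁ a₅ a₇ a₉ a₄ a₈ O) :
    -- (a)
    a₅ ^ 2 = a₁ * a₉ ∧
    -- (b) the solution `v'` is uniquely determined and equals `(a₉/a₅) • v Oᵀ`
    (∀ v v' : Fin d → ℝ,
      lowerBlockMat d a₁ a₅ a₇ a₉ a₄ a₈ O * cuspN d v =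
        cuspN d v' * lowerBlockMat d a₁ a₅ a₇ a₉ a₄ a₈ O →
      v' = (a₉ / a₅) • vecMul v Oᵀ) ∧
    -- (c)
    a₈ = (a₉ / a₅) • Oᵀ.mulVec a₄ ∧
    -- in particular
    (a₁ = a₅ → a₁ = a₅ ∧ a₅ = a₉) := by
  have ha₅' : a₅ ≠ 0 := ne_of_gt ha₅
  have hO1 : O * Oᵀ = 1 := by
    simpa [Matrix.mem_orthogonalGroup_iff, Matrix.star_eq_conjTranspose,
      Matrix.conjTranspose] using hO
  have hO2 : Oᵀ * O = 1 := mul_eq_one_comm.mp hO1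
  -- part (b)
  have hb : ∀ v v' : Fin d → ℝ,
      lowerBlockMat d a₁ a₅ a₇ a₉ a₄ a₈ O * cuspN d v =
        cuspN d v' * lowerBlockMat d a₁ a₅ a₇ a₉ a₄ a₈ O →
      v' = (a₉ / a₅) • vecMul v Oᵀ := by
    intro v v' heq
    have hvm : Matrix.vecMul v' O = (a₉ / a₅) • v := by
      funext l
      have E2 := congrFun (congrFun heq (Sum.inr (Sum.inr 0))) (Sum.inr (Sum.inl l))
      simp only [lowerBlockMat, cuspN, Matrix.mul_apply, Fintype.sum_sum_type,
        Matrix.of_apply, Fin.sum_univ_one, mul_ite, mul_one, mul_zero, zero_mul,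
        one_mul, Finset.sum_ite_eq', Finset.mem_univ, if_pos] at E2
      have hs : (∑ x, v' x * (a₅ * O x l)) = a₅ * ∑ x, v' x * O x l := by
        rw [Finset.mul_sum]; exact Finset.sum_congr rfl fun x _ => by ring
      simp only [Matrix.vecMul, dotProduct, Pi.smul_apply, smul_eq_mul]
      -- E2 : a₈ l + a₉ * v l = ∑ x, v' x * (a₅ * O x l) + a₈ l
      rw [hs] at E2
      field_simp
      linarith
    calc v' = Matrix.vecMul (Matrix.vecMul v' O) Oᵀ := by
            rw [Matrix.vecMul_vecMul, hO1, Matrix.vecMul_one]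
      _ = (a₉ / a₅) • Matrix.vecMul v Oᵀ := by rw [hvm, Matrix.smul_vecMul]
  -- part (a)
  have ha : a₅ ^ 2 = a₁ * a₉ := by
    set i : Fin d := ⟨0, hd⟩
    set w : Fin d → ℝ := Oᵀ.mulVec (Pi.single i 1) with hw
    obtain ⟨v', heq⟩ := h w
    have hOw : O.mulVec w = Pi.single i 1 := by
      rw [hw, Matrix.mulVec_mulVec, hO1, Matrix.one_mulVec]
    have hv' : v' = (a₉ / a₅) • O.mulVec w := by
      rw [hb w v' heq, Matrix.vecMul_transpose]
    have E1 := congrFun (congrFun heq (Sum.inr (Sum.inl i))) (Sum.inl 0)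
    simp only [lowerBlockMat, cuspN, Matrix.mul_apply, Fintype.sum_sum_type,
      Matrix.of_apply, Fin.sum_univ_one] at E1
    -- E1 : a₄ i + ∑ x, a₅ * O i x * w x = v' i * a₁ + a₄ i
    have hs : (∑ x, a₅ * O i x * w x) = a₅ * (O.mulVec w) i := by
      simp only [Matrix.mulVec, dotProduct, Finset.mul_sum]
      exact Finset.sum_congr rfl fun x _ => by ring
    rw [hs, hOw] at E1
    rw [hv'] at E1
    simp only [Pi.smul_apply, smul_eq_mul, hOw, Pi.single_apply, if_pos rfl, ↓reduceIte, ite_mul, one_mul, zero_mul,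
      Finset.sum_ite_eq, Finset.mem_univ] at E1
    field_simp at E1
    nlinarith [E1]
  refine ⟨ha, hb, ?_, ?_⟩
  · -- part (c)
    funext k
    obtain ⟨v', heq⟩ := h (Pi.single k 1)
    have hv' : v' = (a₉ / a₅) • O.mulVec (Pi.single k 1) := by
      rw [hb _ v' heq, Matrix.vecMul_transpose]
    have E3 := congrFun (congrFun heq (Sum.inr (Sum.inr 0))) (Sum.inl 0)
    simp only [lowerBlockMat, cuspN, Matrix.mul_apply, Fintype.sum_sum_type,
      Matrix.of_apply, Fin.sum_univ_one] at E3
    have hdiag : (∑ x, O x k * O x k) = 1 := by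
      have h2 := congrFun (congrFun hO2 k) k
      simpa [Matrix.mul_apply, Matrix.transpose_apply, Matrix.one_apply] using h2
    have hdot : v' ⬝ᵥ v' = (a₉ / a₅) ^ 2 := by
      rw [hv']
      simp only [dotProduct, Pi.smul_apply, smul_eq_mul, Matrix.mulVec_single_one, Matrix.col_apply, mul_one]
      have : (∑ x, a₉ / a₅ * O x k * (a₉ / a₅ * O x k))
          = (a₉ / a₅) ^ 2 * ∑ x, O x k * O x k := by
        rw [Finset.mul_sum]; exact Finset.sum_congr rfl fun x _ => by ring
      rw [this, hdiag, mul_one]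
    have hsum4 : (∑ x, v' x * a₄ x) = (a₉ / a₅) * ∑ x, O x k * a₄ x := by
      rw [hv']
      simp only [Pi.smul_apply, smul_eq_mul, Matrix.mulVec_single_one, Matrix.col_apply, mul_one, Finset.mul_sum]
      exact Finset.sum_congr rfl fun x _ => by ring
    have hsum8 : (∑ x, a₈ x * (Pi.single k 1 : Fin d → ℝ) x) = a₈ k := by
      simp [Pi.single_apply, mul_ite, Finset.sum_ite_eq']
    have hsd : (Pi.single k 1 : Fin d → ℝ) ⬝ᵥ (Pi.single k 1 : Fin d → ℝ) = 1 := by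
      simp [dotProduct, Pi.single_apply]
    rw [hsum8, hsd, hdot, hsum4] at E3
    have hq : a₁ * (a₉ / a₅) ^ 2 = a₉ := by
      field_simp
      linear_combination -ha
    simp only [Pi.smul_apply, smul_eq_mul, Matrix.mulVec, dotProduct,
      Matrix.transpose_apply]
    linarith
  · intro h15
    refine ⟨h15, ?_⟩
    have : a₅ * a₅ = a₅ * a₉ := by rw [← h15]; nlinarith [ha]
    exact mul_left_cancel₀ ha₅' this
end

section
/- Let S be a topological group acting continuously on a Hausdorff topological space X. Let Γ be a subgroup of S that acts properly discontinuously on X, i.e., for every compact subset K ⊆ X only finitely many γ ∈ Γ satisfy γ·K ∩ K ≠ ∅. Suppose there exists a compact subset F ⊆ S with S = Γ·F. Then for every x ∈ X, the stabilizer S_x = {s ∈ S : s·x = x} is a compact subgroup of S. -/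
open Pointwise

/-- the stabilizer compactness argument in part (i) of
Proposition 5.5 of the paper. If a topological group `S` acts continuously on a
Hausdorff space `X`, a subgroup `Γ ≤ S` acts properly discontinuously on `X`, and
`S = Γ·F` for some compact `F ⊆ S`, then every point stabilizer in `S` is compact. -/
theorem stmt8 {S X : Type*} [Group S] [TopologicalSpace S] [IsTopologicalGroup S]
    [TopologicalSpace X] [T2Space X] [MulAction S X] [ContinuousSMul S X]
    (Γ : Subgroup S)
    (hpd : ∀ K : Set X, IsCompact K →
      {γ : S | γ ∈ Γ ∧ ((fun x => γ • x) '' K ∩ K).Nonempty}.Finite)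
    (F : Set S) (hF : IsCompact F) (hSF : (Γ : Set S) * F = Set.univ) :
    ∀ x : X, IsCompact ((MulAction.stabilizer S x : Subgroup S) : Set S) := by
  intro x
  -- K = F • x ∪ {x}, compact
  set K : Set X := (fun s : S => s • x) '' F ∪ {x} with hK
  have hKc : IsCompact K :=
    (hF.image (continuous_id.smul continuous_const)).union isCompact_singleton
  set T : Set S := {γ : S | γ ∈ Γ ∧ ((fun y => γ • y) '' K ∩ K).Nonempty} with hT
  have hTfin : T.Finite := hpd K hKc
  -- stabilizer ⊆ T * F
  have hsub : ((MulAction.stabilizer S x : Subgroup S) : Set S) ⊆ T * F := by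
    intro s hs
    have hs' : s • x = x := hs
    have : s ∈ (Γ : Set S) * F := by rw [hSF]; trivial
    obtain ⟨γ, hγ, f, hf, rfl⟩ := this
    refine ⟨γ, ?_, f, hf, rfl⟩
    refine ⟨hγ, ⟨x, ⟨f • x, Or.inl ⟨f, hf, rfl⟩, ?_⟩, Or.inr rfl⟩⟩
    simpa [mul_smul] using hs'
  have hTFc : IsCompact (T * F) := hTfin.isCompact.mul hF
  refine hTFc.of_isClosed_subset ?_ hsub
  have : ((MulAction.stabilizer S x : Subgroup S) : Set S) =
      (fun s : S => s • x) ⁻¹' {x} := by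
    ext s; simp [MulAction.mem_stabilizer_iff]
  rw [this]
  exact isClosed_singleton.preimage (continuous_id.smul continuous_const)
end
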